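/- Let (V,g) be a finite-dimensional real vector space with a nondegenerate symmetric bilinear form g, and let A be a symmetric bilinear form on V of rank 2. Then (g ∧ (A² − tr(A)·A))·(g ∧ (A² − tr(A)·A)) = (1/2)(tr(A²) − tr(A)²)·Q(g, g ∧ (A² − tr(A)·A)), where the left-hand side is the curvature action of the generalized curvature tensor g ∧ (A² − tr(A)·A) on itself and Q is the Tachibana tensor. -/

import Mathlib

variable {V : Type*} [AddCommGroup V] [Module ℝ V]

/-- Kulkarni–Nomizu product of two (0,2)-tensors. -/
def kn (A B : V → V → ℝ) : V → V → V → V → ℝ := fun x1 x2 x3 x4 =>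
  A x1 x4 * B x2 x3 + A x2 x3 * B x1 x4 - A x1 x3 * B x2 x4 - A x2 x4 * B x1 x3

/-- The endomorphism `(X ∧_A Y)Z = A(Y,Z)X − A(X,Z)Y`. -/
def wedgeV (A : V → V → ℝ) (x y z : V) : V := A y z • x - A x z • y

/-- Tachibana tensor `Q(A,T)` of a (0,2)-tensor `A` and a (0,4)-tensor `T`. -/
def Q4 (A : V → V → ℝ) (T : V → V → V → V → ℝ) : V → V → V → V → V → V → ℝ :=
  fun x1 x2 x3 x4 x y =>
    -(T (wedgeV A x y x1) x2 x3 x4) - T x1 (wedgeV A x y x2) x3 x4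
      - T x1 x2 (wedgeV A x y x3) x4 - T x1 x2 x3 (wedgeV A x y x4)

/-- Derivation action `B · T` of a curvature-like tensor on a (0,4)-tensor, given the
endomorphisms `op x y` metrically associated to `B`. -/
def dotT (op : V → V → V → V) (T : V → V → V → V → ℝ) : V → V → V → V → V → V → ℝ :=
  fun x1 x2 x3 x4 x y =>
    -(T (op x y x1) x2 x3 x4) - T x1 (op x y x2) x3 x4
      - T x1 x2 (op x y x3) x4 - T x1 x2 x3 (op x y x4)

/-- 2×2 Cayley–Hamilton, concretely. -/
lemma ch_fin_two (M : Matrix (Fin 2) (Fin 2) ℝ) :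
    M * M - Matrix.trace M • M + M.det • (1 : Matrix (Fin 2) (Fin 2) ℝ) = 0 := by
  ext i j
  fin_cases i <;> fin_cases j <;>
    simp [Matrix.mul_apply, Matrix.trace, Matrix.det_fin_two, Fin.sum_univ_two,
      Matrix.one_apply] <;> ring

/-- Cayley–Hamilton for an endomorphism of a 2-dimensional space. -/
lemma ch_dim_two {W : Type*} [AddCommGroup W] [Module ℝ W] [FiniteDimensional ℝ W]
    (hW : Module.finrank ℝ W = 2) (f : W →ₗ[ℝ] W) :
    ∃ d : ℝ, (f ∘ₗ f - LinearMap.trace ℝ W f • f + d • (LinearMap.id : W →ₗ[ℝ] W) = 0)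
      ∧ LinearMap.trace ℝ W (f ∘ₗ f) - (LinearMap.trace ℝ W f)^2 = -2*d := by
  classical
  let β : Module.Basis (Fin 2) ℝ W := Module.finBasisOfFinrankEq ℝ W hW
  let e : (W →ₗ[ℝ] W) ≃ₐ[ℝ] Matrix (Fin 2) (Fin 2) ℝ := LinearMap.toMatrixAlgEquiv β
  set M : Matrix (Fin 2) (Fin 2) ℝ := e f with hM
  have htr : LinearMap.trace ℝ W f = Matrix.trace M := by
    rw [LinearMap.trace_eq_matrix_trace ℝ β f]; rfl
  have hch : f ∘ₗ f - LinearMap.trace ℝ W f • f + M.det • (LinearMap.id : W →ₗ[ℝ] W) = 0 := by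
    apply e.injective
    have h2 : e (f ∘ₗ f - LinearMap.trace ℝ W f • f + M.det • LinearMap.id)
        = M * M - Matrix.trace M • M + M.det • 1 := by
      have h3 : f ∘ₗ f = f * f := rfl
      have h4 : (LinearMap.id : W →ₗ[ℝ] W) = 1 := rfl
      rw [h3, h4, map_add, map_sub, map_mul, map_smul, map_smul, map_one, htr]
    rw [h2, ch_fin_two, map_zero]
  refine ⟨M.det, hch, ?_⟩
  have htr2 := congrArg (LinearMap.trace ℝ W) hch
  have h5 : LinearMap.trace ℝ W (LinearMap.id : W →ₗ[ℝ] W) = 2 := by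
    rw [LinearMap.trace_id, hW]; norm_num
  rw [map_add, map_sub, map_smul, map_smul, h5, map_zero] at htr2
  simp only [smul_eq_mul] at htr2
  nlinarith [htr2]

/-- The key facts about `b = a² - tr(a)·a` for a rank-2 endomorphism `a`. -/
lemma rank_two_facts {V : Type*} [AddCommGroup V] [Module ℝ V] [FiniteDimensional ℝ V]
    (a : V →ₗ[ℝ] V)
    (hrank : Module.finrank ℝ (LinearMap.range a) = 2) :
    ∃ d : ℝ,
      (∀ z : V, (a ∘ₗ a - LinearMap.trace ℝ V a • a)
          ((a ∘ₗ a - LinearMap.trace ℝ V a • a) z)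
        = -d • (a ∘ₗ a - LinearMap.trace ℝ V a • a) z)
      ∧ (1/2 : ℝ) * (LinearMap.trace ℝ V (a ∘ₗ a) - (LinearMap.trace ℝ V a) ^ 2) = -d := by
  classical
  set R := LinearMap.range a with hR
  have hmem : ∀ z : V, a z ∈ R := fun z => LinearMap.mem_range_self a z
  set aR : R →ₗ[ℝ] R := a.restrict (fun z _ => hmem z) with haR
  obtain ⟨d, hch, htr2⟩ := ch_dim_two hrank aR
  set ι : R →ₗ[ℝ] V := R.subtype with hι
  set rr : V →ₗ[ℝ] R := a.rangeRestrict with hrr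
  have h1 : a = ι ∘ₗ rr := by ext z; simp [hι, hrr]
  have h2 : aR = rr ∘ₗ ι := by
    ext z
    simp [haR, hι, hrr, LinearMap.restrict_apply]
  have htra : LinearMap.trace ℝ V a = LinearMap.trace ℝ R aR := by
    rw [h1, LinearMap.trace_comp_comm' rr ι, ← h2]
  have htraa : LinearMap.trace ℝ V (a ∘ₗ a) = LinearMap.trace ℝ R (aR ∘ₗ aR) := by
    have h8 : a ∘ₗ a = ι ∘ₗ (rr ∘ₗ (ι ∘ₗ rr)) := by
      rw [h1]; ext z; simp
    have h7 : (rr ∘ₗ (ι ∘ₗ rr)) ∘ₗ ι = aR ∘ₗ aR := by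
      rw [h2]; ext z; simp
    rw [h8, LinearMap.trace_comp_comm' (rr ∘ₗ (ι ∘ₗ rr)) ι, h7]
  have key : ∀ u : V, u ∈ R → a (a u) - LinearMap.trace ℝ V a • a u + d • u = 0 := by
    intro u hu
    have h9 := LinearMap.ext_iff.mp hch ⟨u, hu⟩
    have hc := congrArg (Submodule.subtype R) h9
    simpa [haR, LinearMap.restrict_apply, htra] using hc
  set b : V →ₗ[ℝ] V := a ∘ₗ a - LinearMap.trace ℝ V a • a with hb
  have hbapp : ∀ z : V, b z = a (a z) - LinearMap.trace ℝ V a • a z := by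
    intro z; simp [hb]
  refine ⟨d, ?_, ?_⟩
  · intro z
    have hmem' : b z ∈ R := by
      refine ⟨a z - LinearMap.trace ℝ V a • z, ?_⟩
      rw [map_sub, map_smul, hbapp]
    have hk := key (b z) hmem'
    have h6 : a (a (b z)) - LinearMap.trace ℝ V a • a (b z) = -d • b z := by
      linear_combination (norm := module) hk
    rw [hbapp (b z)]
    exact h6
  · rw [htraa, htra]
    linarith [htr2]

/-- The core algebraic identity. -/
lemma main_aux (g : V →ₗ[ℝ] V →ₗ[ℝ] ℝ) (hg : ∀ u v, g u v = g v u)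
    (b : V →ₗ[ℝ] V) (hbs : ∀ u v, g (b u) v = g (b v) u)
    (d : ℝ) (hb2 : ∀ z : V, b (b z) = -d • b z)
    (op : V → V → V → V)
    (hopf : ∀ x y z, op x y z
      = g (b y) z • x - g (b x) z • y + g y z • (b x) - g x z • (b y)) :
    ∀ x₁ x₂ x₃ x₄ x y : V,
      dotT op (kn (fun u v => g u v) (fun u v => g (b u) v)) x₁ x₂ x₃ x₄ x y
        = -d * Q4 (fun u v => g u v) (kn (fun u v => g u v) (fun u v => g (b u) v))
            x₁ x₂ x₃ x₄ x y := by
  intro x₁ x₂ x₃ x₄ x y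
  have hgb : ∀ u v : V, g u (b v) = g (b v) u := fun u v => hg u (b v)
  have hbb : ∀ u v : V, g (b u) (b v) = -d * g (b u) v := by
    intro u v
    rw [hbs u (b v), hb2, map_smul, LinearMap.smul_apply, smul_eq_mul, hbs v u]
  simp only [dotT, Q4, kn, wedgeV, hopf, map_add, map_sub, map_smul, LinearMap.add_apply,
    LinearMap.sub_apply, LinearMap.smul_apply, smul_eq_mul, hb2, neg_smul, map_neg,
    LinearMap.neg_apply, neg_mul, mul_neg, neg_neg]
  simp only [hbb]
  simp only [hgb]
  simp only [hg y x, hg x₁ x, hg x₁ y, hg x₂ x, hg x₂ y, hg x₂ x₁, hg x₃ x, hg x₃ y,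
    hg x₃ x₁, hg x₃ x₂, hg x₄ x, hg x₄ y, hg x₄ x₁, hg x₄ x₂, hg x₄ x₃,
    hbs y x, hbs x₁ x, hbs x₁ y, hbs x₂ x, hbs x₂ y, hbs x₂ x₁, hbs x₃ x, hbs x₃ y,
    hbs x₃ x₁, hbs x₃ x₂, hbs x₄ x, hbs x₄ y, hbs x₄ x₁, hbs x₄ x₂, hbs x₄ x₃]
  ring

/-- for `rank A = 2`,
`(g∧(A²−tr(A)A))·(g∧(A²−tr(A)A)) = (1/2)(tr(A²)−tr(A)²)·Q(g, g∧(A²−tr(A)A))`. -/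
theorem stmt_15 {V : Type*} [AddCommGroup V] [Module ℝ V] [FiniteDimensional ℝ V]
    (g A : V →ₗ[ℝ] V →ₗ[ℝ] ℝ)
    (hg : ∀ x y, g x y = g y x)
    (hgnd : ∀ x : V, (∀ y : V, g x y = 0) → x = 0)
    (hA : ∀ x y, A x y = A y x)
    (a : V →ₗ[ℝ] V) (ha : ∀ x y, g (a x) y = A x y)
    (hrank : Module.finrank ℝ (LinearMap.range a) = 2)
    (op : V → V → V → V)
    (hop : ∀ x y z w : V,
      g (op x y z) w
        = kn (fun u v => g u v)
            (fun u v => A (a u) v - LinearMap.trace ℝ V a * A u v) x y z w) :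
    ∀ x₁ x₂ x₃ x₄ x y : V,
      dotT op
          (kn (fun u v => g u v) (fun u v => A (a u) v - LinearMap.trace ℝ V a * A u v))
          x₁ x₂ x₃ x₄ x y
        = (1/2 : ℝ) * (LinearMap.trace ℝ V (a ∘ₗ a) - (LinearMap.trace ℝ V a) ^ 2)
            * Q4 (fun u v => g u v)
                (kn (fun u v => g u v) (fun u v => A (a u) v - LinearMap.trace ℝ V a * A u v))
                x₁ x₂ x₃ x₄ x y := by
  obtain ⟨d, hb2, hd2⟩ := rank_two_facts a hrank
  set b : V →ₗ[ℝ] V := a ∘ₗ a - LinearMap.trace ℝ V a • a with hbdef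
  have hbapp : ∀ z : V, b z = a (a z) - LinearMap.trace ℝ V a • a z := by
    intro z; simp [hbdef]
  have hsa : ∀ u v : V, g (a u) v = g u (a v) := fun u v => by
    rw [ha u v, hA u v, ← ha v u, hg (a v) u]
  have hgbv : ∀ u v : V, g (b u) v
      = g (a (a u)) v - LinearMap.trace ℝ V a * g (a u) v := by
    intro u v
    rw [hbapp u]
    simp [map_sub, map_smul, LinearMap.sub_apply, LinearMap.smul_apply, smul_eq_mul]
  have hugb : ∀ u v : V, g u (b v)
      = g u (a (a v)) - LinearMap.trace ℝ V a * g u (a v) := by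
    intro u v
    rw [hbapp v]
    simp [map_sub, map_smul, smul_eq_mul]
  have hbsa : ∀ u v : V, g (b u) v = g u (b v) := by
    intro u v
    rw [hgbv, hugb, hsa (a u) v, hsa u (a v), hsa u v]
  have hbs : ∀ u v : V, g (b u) v = g (b v) u := fun u v =>
    (hbsa u v).trans (hg u (b v))
  have hTp : ∀ u v : V, A (a u) v - LinearMap.trace ℝ V a * A u v = g (b u) v := by
    intro u v
    rw [← ha (a u) v, ← ha u v, hgbv]
  have hT : (fun u v => A (a u) v - LinearMap.trace ℝ V a * A u v)
      = (fun u v : V => g (b u) v) := by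
    funext u v; exact hTp u v
  have hopf : ∀ x y z : V, op x y z
      = g (b y) z • x - g (b x) z • y + g y z • (b x) - g x z • (b y) := by
    intro x y z
    have h0 : ∀ w : V,
        g (op x y z - (g (b y) z • x - g (b x) z • y + g y z • (b x) - g x z • (b y))) w
          = 0 := by
      intro w
      have h1 := hop x y z w
      simp only [kn, hTp] at h1
      simp only [map_sub, map_add, map_smul, LinearMap.sub_apply, LinearMap.add_apply,
        LinearMap.smul_apply, smul_eq_mul, h1]
      ring
    exact sub_eq_zero.mp (hgnd _ h0)
  intro x₁ x₂ x₃ x₄ x y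
  rw [hT, hd2]
  exact main_aux g hg b hbs d hb2 op hopf x₁ x₂ x₃ x₄ x y
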